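/- Every graph class with tree-independence number at most k is (tw,ω)-bounded with binding function f(p) = R(p+1, k+1) − 2, i.e., if G has a tree decomposition in which every bag induces a subgraph with independence number at most k, and ω(G) = p, then the treewidth of G is at most R(p+1, k+1) − 2, where R denotes the Ramsey number. -/

import Mathlib

open SimpleGraph

/-- `S` is an independent set in `G`. -/
def IsIndepOn {V : Type} (G : SimpleGraph V) (S : Set V) : Prop :=
  S.Pairwise fun u v => ¬ G.Adj u v

/-- The independence number of `G`. -/
noncomputable def indepNum {V : Type} (G : SimpleGraph V) : ℕ :=
  sSup {n | ∃ S : Set V, IsIndepOn G S ∧ S.ncard = n}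

/-- The clique number of `G`. -/
noncomputable def cliqueNumber {V : Type} (G : SimpleGraph V) : ℕ :=
  sSup {n | ∃ S : Set V, G.IsClique S ∧ S.ncard = n}

/-- A tree decomposition of a graph `G`. -/
structure TreeDecomp {V : Type} (G : SimpleGraph V) where
  ι : Type
  tree : SimpleGraph ι
  tree_isTree : tree.IsTree
  bag : ι → Set V
  mem_bag : ∀ v : V, ∃ t, v ∈ bag t
  edge_bag : ∀ ⦃u v : V⦄, G.Adj u v → ∃ t, u ∈ bag t ∧ v ∈ bag t
  bag_connected : ∀ v : V, (tree.induce {t | v ∈ bag t}).Connected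

/-- The independence number of a family of bags: the maximum independence number
of a subgraph of `G` induced by some bag. -/
noncomputable def bagAlpha {V : Type} (G : SimpleGraph V) {ι : Type} (bag : ι → Set V) : ℕ :=
  sSup {n | ∃ t, ∃ S : Set V, S ⊆ bag t ∧ IsIndepOn G S ∧ S.ncard = n}

/-- The independence number of a tree decomposition. -/
noncomputable def tdAlpha {V : Type} {G : SimpleGraph V} (td : TreeDecomp G) : ℕ :=
  bagAlpha G td.bag

/-- The width of a tree decomposition: maximum bag size minus one. -/
noncomputable def tdWidth {V : Type} {G : SimpleGraph V} (td : TreeDecomp G) : ℕ :=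
  sSup {n | ∃ t, (td.bag t).ncard = n} - 1

/-- The treewidth of `G`. -/
noncomputable def treewidth {V : Type} (G : SimpleGraph V) : ℕ :=
  sInf {w | ∃ td : TreeDecomp G, tdWidth td = w}

/-- The tree-independence number of `G`. -/
noncomputable def treeIndepNum {V : Type} (G : SimpleGraph V) : ℕ :=
  sInf {k | ∃ td : TreeDecomp G, tdAlpha td = k}

/-- A graph is chordal if it has no induced cycle of length at least four. -/
def Chordal {V : Type} (G : SimpleGraph V) : Prop :=
  ∀ n : ℕ, 4 ≤ n → IsEmpty (cycleGraph n ↪g G)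

/-- The Ramsey number `R(p, q)`: the least `N` such that every graph on `N` vertices
contains a clique of size `p` or an independent set of size `q`. -/
noncomputable def ramsey (p q : ℕ) : ℕ :=
  sInf {N | ∀ G : SimpleGraph (Fin N),
    (∃ S : Set (Fin N), G.IsClique S ∧ S.ncard = p) ∨
    (∃ S : Set (Fin N), IsIndepOn G S ∧ S.ncard = q)}

lemma ramsey_aux : ∀ n p q : ℕ, p + q ≤ n →
    ∃ N : ℕ, ∀ (V : Type) (G : SimpleGraph V) (A : Set V), A.Finite → N ≤ A.ncard →
      (∃ S : Set V, S ⊆ A ∧ G.IsClique S ∧ S.ncard = p) ∨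
      (∃ S : Set V, S ⊆ A ∧ IsIndepOn G S ∧ S.ncard = q) := by
  intro n
  induction n with
  | zero =>
    intro p q h
    refine ⟨0, fun V G A _ _ => ?_⟩
    have hp : p = 0 := by omega
    exact Or.inl ⟨∅, Set.empty_subset _, by simp [SimpleGraph.IsClique], by simp [hp]⟩
  | succ n ih =>
    intro p q h
    match p, q with
    | 0, q =>
      exact ⟨0, fun V G A _ _ =>
        Or.inl ⟨∅, Set.empty_subset _, by simp [SimpleGraph.IsClique], by simp⟩⟩
    | p + 1, 0 =>
      exact ⟨0, fun V G A _ _ =>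
        Or.inr ⟨∅, Set.empty_subset _, by simp [IsIndepOn], by simp⟩⟩
    | p + 1, q + 1 =>
      obtain ⟨N1, h1⟩ := ih p (q + 1) (by omega)
      obtain ⟨N2, h2⟩ := ih (p + 1) q (by omega)
      refine ⟨N1 + N2 + 1, fun V G A hAfin hA => ?_⟩
      obtain ⟨v, hv⟩ : A.Nonempty := by
        rw [← Set.ncard_pos hAfin]; omega
      set A' : Set V := A \ {v} with hA'
      have hA'fin : A'.Finite := hAfin.diff
      have hA'card : A'.ncard = A.ncard - 1 := Set.ncard_diff_singleton_of_mem hv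
      set B : Set V := A' ∩ {u | G.Adj v u} with hB
      set C : Set V := A' \ {u | G.Adj v u} with hC
      have hBC : B.ncard + C.ncard = A'.ncard :=
        Set.ncard_inter_add_ncard_diff_eq_ncard A' {u | G.Adj v u} hA'fin
      have hvB : v ∉ B := fun hx => hx.1.2 rfl
      have hvC : v ∉ C := fun hx => hx.1.2 rfl
      by_cases hcase : N1 ≤ B.ncard
      · rcases h1 V G B (hA'fin.inter_of_left _) hcase with ⟨S, hSB, hScl, hScard⟩ | ⟨S, hSB, hSi, hScard⟩
        · refine Or.inl ⟨insert v S, ?_, ?_, ?_⟩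
          · exact Set.insert_subset hv (hSB.trans ((Set.inter_subset_left).trans Set.diff_subset))
          · exact hScl.insert fun u hu _ => (hSB hu).2
          · rw [Set.ncard_insert_of_notMem (fun hvS => hvB (hSB hvS))
              ((hA'fin.inter_of_left _).subset hSB), hScard]
        · exact Or.inr ⟨S, hSB.trans ((Set.inter_subset_left).trans Set.diff_subset), hSi, hScard⟩
      · have hcase2 : N2 ≤ C.ncard := by omega
        rcases h2 V G C hA'fin.diff hcase2 with ⟨S, hSC, hScl, hScard⟩ | ⟨S, hSC, hSi, hScard⟩
        · exact Or.inl ⟨S, hSC.trans (Set.diff_subset.trans Set.diff_subset), hScl, hScard⟩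
        · refine Or.inr ⟨insert v S, ?_, ?_, ?_⟩
          · exact Set.insert_subset hv (hSC.trans (Set.diff_subset.trans Set.diff_subset))
          · refine hSi.insert fun u hu _ => ⟨fun hadj => (hSC hu).2 hadj, fun hadj => (hSC hu).2 hadj.symm⟩
          · rw [Set.ncard_insert_of_notMem (fun hvS => hvC (hSC hvS))
              (hA'fin.diff.subset hSC), hScard]


lemma ramsey_mem (p q : ℕ) : ramsey p q ∈ {N | ∀ G : SimpleGraph (Fin N),
    (∃ S : Set (Fin N), G.IsClique S ∧ S.ncard = p) ∨
    (∃ S : Set (Fin N), IsIndepOn G S ∧ S.ncard = q)} := by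
  apply Nat.sInf_mem
  obtain ⟨N, hN⟩ := ramsey_aux (p + q) p q le_rfl
  refine ⟨N, fun G => ?_⟩
  rcases hN (Fin N) G Set.univ Set.finite_univ (by simp [Set.ncard_univ]) with
    ⟨S, _, h1, h2⟩ | ⟨S, _, h1, h2⟩
  · exact Or.inl ⟨S, h1, h2⟩
  · exact Or.inr ⟨S, h1, h2⟩

/-- any set of size `ramsey p q` in any graph contains a clique of size p or indep set of size q -/
lemma ramsey_set {V : Type} (G : SimpleGraph V) (p q : ℕ) (A : Set V) [Fintype A]
    (hcard : Fintype.card A = ramsey p q) :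
    (∃ S : Set V, S ⊆ A ∧ G.IsClique S ∧ S.ncard = p) ∨
    (∃ S : Set V, S ⊆ A ∧ IsIndepOn G S ∧ S.ncard = q) := by
  set R := ramsey p q
  let e : Fin R ≃ A := (Fintype.equivFinOfCardEq hcard).symm
  let f : Fin R → V := fun i => (e i : V)
  have hf : Function.Injective f := Subtype.val_injective.comp e.injective
  have hfA : ∀ i, f i ∈ A := fun i => (e i).2
  have key := ramsey_mem p q (G.comap f)
  rcases key with ⟨S, hS, hScard⟩ | ⟨S, hS, hScard⟩
  · refine Or.inl ⟨f '' S, ?_, ?_, by rw [Set.ncard_image_of_injective _ hf, hScard]⟩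
    · rintro x ⟨i, _, rfl⟩; exact hfA i
    · rintro x ⟨i, hi, rfl⟩ y ⟨j, hj, rfl⟩ hxy
      exact hS hi hj (fun hij => hxy (by rw [hij]))
  · refine Or.inr ⟨f '' S, ?_, ?_, by rw [Set.ncard_image_of_injective _ hf, hScard]⟩
    · rintro x ⟨i, _, rfl⟩; exact hfA i
    · rintro x ⟨i, hi, rfl⟩ y ⟨j, hj, rfl⟩ hxy
      exact hS hi hj (fun hij => hxy (by rw [hij]))

theorem stmt0 {V : Type} [Fintype V] (G : SimpleGraph V) (k p : ℕ)
    (td : TreeDecomp G) (htd : tdAlpha td ≤ k) (hp : cliqueNumber G = p) :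
    treewidth G ≤ ramsey (p + 1) (k + 1) - 2 := by
  set R := ramsey (p + 1) (k + 1) with hR
  -- every bag has ncard ≤ R - 1
  have hbag : ∀ t, (td.bag t).ncard ≤ R - 1 := by
    intro t
    by_contra hcon
    have hle : R ≤ (td.bag t).ncard := by omega
    obtain ⟨A, hAsub, hAcard⟩ := Set.exists_subset_card_eq (s := td.bag t) hle
    haveI : Fintype A := (Set.toFinite A).fintype
    have hAcard' : Fintype.card A = R := by
      rw [← Nat.card_eq_fintype_card, Nat.card_coe_set_eq, hAcard]
    rcases ramsey_set G (p + 1) (k + 1) A hAcard' with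
      ⟨S, hSA, hScl, hScard⟩ | ⟨S, hSA, hSi, hScard⟩
    · -- clique of size p+1 contradicts cliqueNumber = p
      have hmem : p + 1 ∈ {n | ∃ S : Set V, G.IsClique S ∧ S.ncard = n} :=
        ⟨S, hScl, hScard⟩
      have hbdd : BddAbove {n | ∃ S : Set V, G.IsClique S ∧ S.ncard = n} := by
        refine ⟨Nat.card V, ?_⟩
        rintro n ⟨S, -, rfl⟩
        exact le_trans (Set.ncard_le_ncard (Set.subset_univ S) Set.finite_univ)
          (le_of_eq (Set.ncard_univ V))
      have := le_csSup hbdd hmem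
      rw [← cliqueNumber, hp] at this
      omega
    · -- independent set of size k+1 contradicts tdAlpha ≤ k
      have hmem : k + 1 ∈ {n | ∃ t, ∃ S : Set V, S ⊆ td.bag t ∧ IsIndepOn G S ∧ S.ncard = n} :=
        ⟨t, S, hSA.trans hAsub, hSi, hScard⟩
      have hbdd : BddAbove {n | ∃ t, ∃ S : Set V, S ⊆ td.bag t ∧ IsIndepOn G S ∧ S.ncard = n} := by
        refine ⟨Nat.card V, ?_⟩
        rintro n ⟨t, S, -, -, rfl⟩
        exact le_trans (Set.ncard_le_ncard (Set.subset_univ S) Set.finite_univ)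
          (le_of_eq (Set.ncard_univ V))
      have := le_csSup hbdd hmem
      have h2 : k + 1 ≤ tdAlpha td := this
      omega
  have hwidth : tdWidth td ≤ R - 2 := by
    have hsup : sSup {n | ∃ t, (td.bag t).ncard = n} ≤ R - 1 := by
      apply csSup_le'
      rintro n ⟨t, rfl⟩
      exact hbag t
    calc tdWidth td = sSup {n | ∃ t, (td.bag t).ncard = n} - 1 := rfl
      _ ≤ (R - 1) - 1 := Nat.sub_le_sub_right hsup 1
      _ = R - 2 := by omega
  exact le_trans (Nat.sInf_le ⟨td, rfl⟩) hwidth
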